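/- arXiv:0903.3857 — 2 statements merged into one kernel-verified Lean document; each statement's English description precedes it below -/
import Mathlib

section
/- For any complex numbers c and d, any r > 0 and any δ ∈ (0,1), one has (1/(2π)) ∫₀^{2π} log⁺|1 + c/(r e^{iφ} − d)| dφ ≤ 2π |c|^δ / (δ(1−δ) r^δ). -/
open MeasureTheory Real

noncomputable def logPlus (x : ℝ) : ℝ := max (Real.log x) 0

lemma logPlus_nonneg (x : ℝ) : 0 ≤ logPlus x := le_max_right _ _

lemma rpow_one_add_le {x δ : ℝ} (hx : 0 ≤ x) (h0 : 0 ≤ δ) (h1 : δ ≤ 1) :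
    (1 + x) ^ δ ≤ 1 + x ^ δ := by
  have h := NNReal.rpow_add_le_add_rpow 1 x.toNNReal h0 h1
  have h2 := NNReal.coe_le_coe.mpr h
  simpa [NNReal.coe_rpow, Real.coe_toNNReal x hx] using h2

lemma logPlus_one_add_le {δ : ℝ} (hδ0 : 0 < δ) (hδ1 : δ ≤ 1) (w : ℂ) :
    logPlus ‖1 + w‖ ≤ ‖w‖ ^ δ / δ := by
  set x := ‖w‖ with hxdef
  have hx : 0 ≤ x := norm_nonneg _
  have hy : (1:ℝ) ≤ 1 + x := by linarith
  have h1 : logPlus ‖1 + w‖ ≤ Real.log (1 + x) := by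
    have hxy : ‖1 + w‖ ≤ 1 + x := by
      calc ‖1 + w‖ ≤ ‖(1:ℂ)‖ + ‖w‖ := norm_add_le _ _
        _ = 1 + x := by rw [norm_one, hxdef]
    apply max_le
    · rcases eq_or_lt_of_le (norm_nonneg (1 + w)) with h | h
      · rw [← h, Real.log_zero]; exact Real.log_nonneg hy
      · exact Real.log_le_log h hxy
    · exact Real.log_nonneg hy
  have h2 : Real.log (1 + x) ≤ x ^ δ / δ := by
    have hp : (0:ℝ) < (1 + x) ^ δ := Real.rpow_pos_of_pos (by linarith) δ
    have h3 := Real.log_le_sub_one_of_pos hp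
    rw [Real.log_rpow (by linarith)] at h3
    have h4 := rpow_one_add_le hx hδ0.le hδ1
    rw [le_div_iff₀ hδ0]
    nlinarith
  linarith

lemma norm_circle_sub_ge (d : ℂ) {r : ℝ} (hr : 0 ≤ r) (φ : ℝ) :
    r * |Real.sin (φ - d.arg)| ≤ ‖(r:ℂ) * Complex.exp (φ * Complex.I) - d‖ := by
  set θ := d.arg with hθ
  have key : Complex.exp (-(θ:ℂ) * Complex.I) * ((r:ℂ) * Complex.exp (φ * Complex.I) - d)
      = (r:ℂ) * Complex.exp ((↑(φ - θ)) * Complex.I) - (‖d‖ : ℂ) := by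
    have hd : (‖d‖ : ℂ) * Complex.exp (θ * Complex.I) = d :=
      Complex.norm_mul_exp_arg_mul_I d
    rw [mul_sub]
    congr 1
    · rw [mul_left_comm, ← Complex.exp_add]
      congr 2
      push_cast
      ring
    · conv_lhs => rw [← hd]
      rw [mul_left_comm, ← Complex.exp_add]
      have h0 : -(θ:ℂ) * Complex.I + θ * Complex.I = 0 := by ring
      rw [h0, Complex.exp_zero, mul_one]
  have h1 : ‖(r:ℂ) * Complex.exp (φ * Complex.I) - d‖
      = ‖(r:ℂ) * Complex.exp ((↑(φ - θ)) * Complex.I) - (‖d‖ : ℂ)‖ := by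
    rw [← key, norm_mul]
    rw [show -(θ:ℂ) = ((-θ : ℝ) : ℂ) by push_cast; ring]
    rw [Complex.norm_exp_ofReal_mul_I, one_mul]
  rw [h1]
  have him : ((r:ℂ) * Complex.exp ((↑(φ - θ)) * Complex.I) - (‖d‖ : ℂ)).im
      = r * Real.sin (φ - θ) := by
    simp only [Complex.sub_im, Complex.mul_im, Complex.ofReal_re, Complex.ofReal_im,
      Complex.exp_ofReal_mul_I_re, Complex.exp_ofReal_mul_I_im]
    ring
  calc r * |Real.sin (φ - θ)| = |r * Real.sin (φ - θ)| := by
        rw [abs_mul, abs_of_nonneg hr]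
    _ = |((r:ℂ) * Complex.exp ((↑(φ - θ)) * Complex.I) - (‖d‖ : ℂ)).im| := by
        rw [him]
    _ ≤ ‖(r:ℂ) * Complex.exp ((↑(φ - θ)) * Complex.I) - (‖d‖ : ℂ)‖ :=
        Complex.abs_im_le_norm _

lemma sin_rpow_bound {δ : ℝ} (hδ0 : 0 < δ) {v : ℝ} (hv : v ∈ Set.Icc 0 π) :
    |Real.sin v| ^ (-δ) ≤ (π/2)^δ * (v ^ (-δ) + (π - v) ^ (-δ)) := by
  have hπ := Real.pi_pos
  have hmain : ∀ b : ℝ, 0 < b → 2/π * b ≤ |Real.sin v| →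
      |Real.sin v| ^ (-δ) ≤ (π/2)^δ * b ^ (-δ) := by
    intro b hb hle
    have h1 : |Real.sin v| ^ (-δ) ≤ (2/π * b) ^ (-δ) :=
      Real.rpow_le_rpow_of_nonpos (mul_pos (by positivity) hb) hle (by linarith)
    have h2 : (2/π * b) ^ (-δ) = (π/2)^δ * b ^ (-δ) := by
      rw [Real.mul_rpow (by positivity) hb.le]
      congr 1
      rw [Real.rpow_neg (by positivity), show (π/2 : ℝ) = (2/π)⁻¹ by rw [inv_div],
        Real.inv_rpow (by positivity)]
    linarith [h1, h2.le, h2.ge]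
  rcases eq_or_ne (Real.sin v) 0 with hs | hs
  · rw [hs, abs_zero, Real.zero_rpow (neg_ne_zero.mpr hδ0.ne')]
    exact mul_nonneg (Real.rpow_nonneg (by positivity) _)
      (add_nonneg (Real.rpow_nonneg hv.1 _) (Real.rpow_nonneg (by linarith [hv.2]) _))
  · have hsnn : 0 ≤ Real.sin v := Real.sin_nonneg_of_nonneg_of_le_pi hv.1 hv.2
    rcases le_or_gt v (π/2) with hv2 | hv2
    · have hb : 0 < v := hv.1.lt_of_ne (by rintro rfl; simp at hs)
      have hle : 2/π * v ≤ |Real.sin v| := by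
        rw [abs_of_nonneg hsnn]; exact Real.mul_le_sin hv.1 hv2
      have := hmain v hb hle
      have h3 : 0 ≤ (π/2)^δ * (π - v) ^ (-δ) :=
        mul_nonneg (Real.rpow_nonneg (by positivity) _)
          (Real.rpow_nonneg (by linarith [hv.2]) _)
      rw [mul_add]; linarith
    · have hb : 0 < π - v := by
        rcases lt_or_eq_of_le hv.2 with h | h
        · linarith
        · exfalso; apply hs; rw [h, Real.sin_pi]
      have hle : 2/π * (π - v) ≤ |Real.sin v| := by
        rw [abs_of_nonneg hsnn, ← Real.sin_pi_sub]
        exact Real.mul_le_sin hb.le (by linarith)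
      have := hmain (π - v) hb hle
      have h3 : 0 ≤ (π/2)^δ * v ^ (-δ) :=
        mul_nonneg (Real.rpow_nonneg (by positivity) _) (Real.rpow_nonneg hv.1 _)
      rw [mul_add]; linarith

set_option maxHeartbeats 1000000 in
theorem stmt_1 (c d : ℂ) (r δ : ℝ) (hr : 0 < r) (hδ : δ ∈ Set.Ioo (0:ℝ) 1) :
    (1 / (2 * Real.pi)) *
        ∫ φ in (0:ℝ)..(2 * Real.pi),
          logPlus ‖1 + c / ((r : ℂ) * Complex.exp (φ * Complex.I) - d)‖
      ≤ 2 * Real.pi * ‖c‖ ^ δ / (δ * (1 - δ) * r ^ δ) := by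
  obtain ⟨hδ0, hδ1⟩ := hδ
  have hπ := Real.pi_pos
  have hδ1' : (0:ℝ) < 1 - δ := by linarith
  set θ := d.arg with hθdef
  set S : ℝ → ℝ := fun u => |Real.sin u| ^ (-δ) with hSdef
  set C : ℝ := ‖c‖ ^ δ / δ * r ^ (-δ) with hCdef
  have hC : 0 ≤ C := by
    apply mul_nonneg _ (Real.rpow_nonneg hr.le _)
    exact div_nonneg (Real.rpow_nonneg (norm_nonneg _) _) hδ0.le
  -- rpow integrability pieces
  have hrp : IntervalIntegrable (fun x : ℝ => x ^ (-δ)) volume 0 π :=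
    intervalIntegral.intervalIntegrable_rpow' (by linarith)
  have hrp2 : IntervalIntegrable (fun x : ℝ => (π - x) ^ (-δ)) volume 0 π := by
    have h := (hrp.comp_sub_left π).symm
    simpa using h
  have gA_int : IntervalIntegrable
      (fun u : ℝ => (π/2)^δ * (u ^ (-δ) + (π - u) ^ (-δ))) volume 0 π :=
    (hrp.add hrp2).const_mul _
  have Smeas : Measurable S := by
    have hobs : S = fun u => if Real.sin u = 0 then 0
        else Real.exp (Real.log |Real.sin u| * (-δ)) := by
      funext u
      by_cases h : Real.sin u = 0
      · simp [hSdef, h, Real.zero_rpow (neg_ne_zero.mpr hδ0.ne')]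
      · rw [if_neg h]
        show |Real.sin u| ^ (-δ) = Real.exp (Real.log |Real.sin u| * (-δ))
        rw [Real.rpow_def_of_pos (abs_pos.mpr h)]
    rw [hobs]
    exact Measurable.ite (Real.measurable_sin (measurableSet_singleton 0)) measurable_const
      (Real.measurable_exp.comp ((Real.measurable_log.comp Real.measurable_sin.abs).mul_const _))
  have SboundA : ∀ u ∈ Set.Icc (0:ℝ) π, S u ≤ (π/2)^δ * (u ^ (-δ) + (π - u) ^ (-δ)) :=
    fun u hu => sin_rpow_bound hδ0 hu
  have SA : IntervalIntegrable S volume 0 π := by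
    apply gA_int.mono_fun' Smeas.aestronglyMeasurable
    rw [Set.uIoc_of_le hπ.le]
    filter_upwards [ae_restrict_mem measurableSet_Ioc] with u hu
    rw [Real.norm_eq_abs, abs_of_nonneg (Real.rpow_nonneg (abs_nonneg _) _)]
    exact SboundA u (Set.Ioc_subset_Icc_self hu)
  have Seq : ∀ (n : ℤ) (x : ℝ), S (x - n * π) = S x := by
    intro n x
    show |Real.sin (x - n * π)| ^ (-δ) = |Real.sin x| ^ (-δ)
    have habs : |(-1:ℝ) ^ n| = 1 := by
      rcases Int.even_or_odd n with h | h
      · rw [h.neg_one_zpow, abs_one]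
      · rw [h.neg_one_zpow, abs_neg, abs_one]
    rw [Real.sin_sub_int_mul_pi, abs_mul, habs, one_mul]
  have Sn : ∀ n : ℤ, IntervalIntegrable S volume ((n:ℝ) * π) ((n:ℝ) * π + π) := by
    intro n
    have h := SA.comp_sub_right ((n:ℝ) * π)
    have heq : (fun x => S (x - (n:ℝ) * π)) = S := funext (Seq n)
    rw [heq, zero_add, show π + (n:ℝ) * π = (n:ℝ) * π + π by ring] at h
    exact h
  have t1 : IntervalIntegrable S volume (-π) 0 := by
    simpa using Sn (-1)
  have SB : IntervalIntegrable S volume π (2*π) := by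
    have h := Sn 1
    rw [show ((1:ℤ):ℝ) * π = π by push_cast; ring, show π + π = 2*π by ring] at h
    exact h
  have t4 : IntervalIntegrable S volume (2*π) (3*π) := by
    have h := Sn 2
    rw [show ((2:ℤ):ℝ) * π = 2*π by push_cast; ring, show 2*π + π = 3*π by ring] at h
    exact h
  have Sbig : IntervalIntegrable S volume (-π) (3*π) := ((t1.trans SA).trans SB).trans t4
  have Sshift : IntervalIntegrable (fun φ : ℝ => S (φ - θ)) volume 0 (2*π) := by
    have h1 := Complex.neg_pi_lt_arg d
    have h2 := Complex.arg_le_pi d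
    have hsub : IntervalIntegrable S volume (0 - θ) (2*π - θ) := by
      apply Sbig.mono_set
      rw [Set.uIcc_of_le (by linarith), Set.uIcc_of_le (by linarith)]
      exact Set.Icc_subset_Icc (by linarith) (by linarith)
    have h := hsub.comp_sub_right θ
    rw [show (0:ℝ) - θ + θ = 0 by ring, show 2*π - θ + θ = 2*π by ring] at h
    exact h
  -- integral computations
  have hIπ : ∫ u in (0:ℝ)..π, u ^ (-δ) = π ^ (1-δ) / (1-δ) := by
    rw [integral_rpow (Or.inl (by linarith))]
    rw [Real.zero_rpow (by linarith : -δ + 1 ≠ 0), sub_zero,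
      show -δ + 1 = 1 - δ by ring]
  have hIA2 : ∫ u in (0:ℝ)..π, (π - u) ^ (-δ) = π ^ (1-δ) / (1-δ) := by
    have h := intervalIntegral.integral_comp_sub_left (a := 0) (b := π)
      (fun x : ℝ => x ^ (-δ)) π
    rw [sub_self, sub_zero] at h
    rw [h, hIπ]
  have hA : ∫ u in (0:ℝ)..π, S u ≤ (π/2)^δ * (2 * (π ^ (1-δ) / (1-δ))) := by
    calc ∫ u in (0:ℝ)..π, S u
        ≤ ∫ u in (0:ℝ)..π, (π/2)^δ * (u ^ (-δ) + (π - u) ^ (-δ)) :=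
          intervalIntegral.integral_mono_on hπ.le SA gA_int SboundA
      _ = (π/2)^δ * ((∫ u in (0:ℝ)..π, u ^ (-δ)) + ∫ u in (0:ℝ)..π, (π - u) ^ (-δ)) := by
          rw [intervalIntegral.integral_const_mul, intervalIntegral.integral_add hrp hrp2]
      _ = (π/2)^δ * (2 * (π ^ (1-δ) / (1-δ))) := by rw [hIπ, hIA2]; ring
  -- B part
  have hrpB1 : IntervalIntegrable (fun u : ℝ => (u - π) ^ (-δ)) volume π (2*π) := by
    have h := hrp.comp_sub_right π
    rw [zero_add, show π + π = 2*π by ring] at h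
    exact h
  have hrpB2 : IntervalIntegrable (fun u : ℝ => (2*π - u) ^ (-δ)) volume π (2*π) := by
    have h := (hrp.comp_sub_left (2*π)).symm
    rw [show 2*π - π = π by ring, sub_zero] at h
    exact h
  have gB_int : IntervalIntegrable
      (fun u : ℝ => (π/2)^δ * ((u - π) ^ (-δ) + (2*π - u) ^ (-δ))) volume π (2*π) :=
    (hrpB1.add hrpB2).const_mul _
  have SboundB : ∀ u ∈ Set.Icc π (2*π), S u ≤ (π/2)^δ * ((u - π) ^ (-δ) + (2*π - u) ^ (-δ)) := by
    intro u hu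
    have h1 : S u = S (u - π) := by
      have := Seq 1 u
      rw [show ((1:ℤ):ℝ) * π = π by push_cast; ring] at this
      exact this.symm
    rw [h1]
    have h2 := sin_rpow_bound hδ0 (v := u - π)
      ⟨by linarith [hu.1], by linarith [hu.2]⟩
    rw [show π - (u - π) = 2*π - u by ring] at h2
    exact h2
  have hIB1 : ∫ u in π..(2*π), (u - π) ^ (-δ) = π ^ (1-δ) / (1-δ) := by
    have h := intervalIntegral.integral_comp_sub_right (a := π) (b := 2*π)
      (fun x : ℝ => x ^ (-δ)) π
    rw [sub_self, show 2*π - π = π by ring] at h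
    rw [h, hIπ]
  have hIB2 : ∫ u in π..(2*π), (2*π - u) ^ (-δ) = π ^ (1-δ) / (1-δ) := by
    have h := intervalIntegral.integral_comp_sub_left (a := π) (b := 2*π)
      (fun x : ℝ => x ^ (-δ)) (2*π)
    rw [sub_self, show 2*π - π = π by ring] at h
    rw [h, hIπ]
  have hB : ∫ u in π..(2*π), S u ≤ (π/2)^δ * (2 * (π ^ (1-δ) / (1-δ))) := by
    calc ∫ u in π..(2*π), S u
        ≤ ∫ u in π..(2*π), (π/2)^δ * ((u - π) ^ (-δ) + (2*π - u) ^ (-δ)) :=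
          intervalIntegral.integral_mono_on (by linarith) SB gB_int SboundB
      _ = (π/2)^δ * ((∫ u in π..(2*π), (u - π) ^ (-δ)) + ∫ u in π..(2*π), (2*π - u) ^ (-δ)) := by
          rw [intervalIntegral.integral_const_mul, intervalIntegral.integral_add hrpB1 hrpB2]
      _ = (π/2)^δ * (2 * (π ^ (1-δ) / (1-δ))) := by rw [hIB1, hIB2]; ring
  have hJsplit : ∫ u in (0:ℝ)..(2*π), S u = (∫ u in (0:ℝ)..π, S u) + ∫ u in π..(2*π), S u :=
    (intervalIntegral.integral_add_adjacent_intervals SA SB).symm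
  have hval : (π/2)^δ * π ^ (1-δ) ≤ π := by
    rw [Real.div_rpow hπ.le (by norm_num : (0:ℝ) ≤ 2), div_mul_eq_mul_div,
      ← Real.rpow_add hπ, show δ + (1-δ) = 1 by ring, Real.rpow_one]
    exact div_le_self hπ.le (Real.one_le_rpow (by norm_num) hδ0.le)
  have hJ2 : ∫ u in (0:ℝ)..(2*π), S u ≤ 4 * π / (1-δ) := by
    rw [hJsplit]
    have : (π/2)^δ * (2 * (π ^ (1-δ) / (1-δ))) + (π/2)^δ * (2 * (π ^ (1-δ) / (1-δ)))
        = 4 * ((π/2)^δ * π ^ (1-δ)) / (1-δ) := by ring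
    have h4 : 4 * ((π/2)^δ * π ^ (1-δ)) / (1-δ) ≤ 4 * π / (1-δ) := by
      exact (div_le_div_iff_of_pos_right hδ1').mpr (by linarith)
    linarith
  -- main pointwise bound
  have key : ∀ φ : ℝ, Real.sin (φ - θ) ≠ 0 →
      logPlus ‖1 + c / ((r:ℂ) * Complex.exp (φ * Complex.I) - d)‖ ≤ C * S (φ - θ) := by
    intro φ hs
    have habs : 0 < |Real.sin (φ - θ)| := abs_pos.mpr hs
    have hm : 0 < r * |Real.sin (φ - θ)| := mul_pos hr habs
    have hM : r * |Real.sin (φ - θ)| ≤ ‖(r:ℂ) * Complex.exp (φ * Complex.I) - d‖ :=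
      norm_circle_sub_ge d hr.le φ
    have hMpos : 0 < ‖(r:ℂ) * Complex.exp (φ * Complex.I) - d‖ := hm.trans_le hM
    have hrpowpos : 0 < (r * |Real.sin (φ - θ)|) ^ δ := Real.rpow_pos_of_pos hm δ
    calc logPlus ‖1 + c / ((r:ℂ) * Complex.exp (φ * Complex.I) - d)‖
        ≤ ‖c / ((r:ℂ) * Complex.exp (φ * Complex.I) - d)‖ ^ δ / δ :=
          logPlus_one_add_le hδ0 hδ1.le _
      _ = ‖c‖ ^ δ / δ * (‖(r:ℂ) * Complex.exp (φ * Complex.I) - d‖ ^ δ)⁻¹ := by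
          rw [norm_div, Real.div_rpow (norm_nonneg _) (norm_nonneg _)]
          ring
      _ ≤ ‖c‖ ^ δ / δ * ((r * |Real.sin (φ - θ)|) ^ δ)⁻¹ := by
          apply mul_le_mul_of_nonneg_left _
            (div_nonneg (Real.rpow_nonneg (norm_nonneg _) _) hδ0.le)
          exact inv_anti₀ hrpowpos (Real.rpow_le_rpow hm.le hM hδ0.le)
      _ = C * S (φ - θ) := by
          show _ = ‖c‖ ^ δ / δ * r ^ (-δ) * (|Real.sin (φ - θ)| ^ (-δ))
          rw [Real.mul_rpow hr.le (abs_nonneg _), mul_inv,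
            ← Real.rpow_neg hr.le, ← Real.rpow_neg (abs_nonneg _), mul_assoc]
  have hae : (fun φ : ℝ => logPlus ‖1 + c / ((r:ℂ) * Complex.exp (φ * Complex.I) - d)‖)
      ≤ᵐ[volume] fun φ : ℝ => C * S (φ - θ) := by
    have hZ : volume {φ : ℝ | Real.sin (φ - θ) = 0} = 0 := by
      refine measure_mono_null ?_
        ((Set.countable_range fun n : ℤ => θ + (n:ℝ) * π).measure_zero _)
      intro φ hφ
      rw [Set.mem_setOf_eq, Real.sin_eq_zero_iff] at hφ
      obtain ⟨n, hn⟩ := hφ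
      exact ⟨n, show θ + (n:ℝ) * π = φ by linarith⟩
    have h1 : ∀ᵐ φ : ℝ, Real.sin (φ - θ) ≠ 0 := by
      rw [ae_iff]
      simpa only [ne_eq, not_not] using hZ
    filter_upwards [h1] with φ hφ using key φ hφ
  have hg_int : IntervalIntegrable (fun φ : ℝ => C * S (φ - θ)) volume 0 (2*π) :=
    Sshift.const_mul C
  have hf_meas : Measurable fun φ : ℝ =>
      logPlus ‖1 + c / ((r:ℂ) * Complex.exp (φ * Complex.I) - d)‖ := by
    have hbase : Measurable fun φ : ℝ =>
        ‖1 + c / ((r:ℂ) * Complex.exp (φ * Complex.I) - d)‖ := by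
      apply Measurable.norm
      apply measurable_const.add
      apply Measurable.div measurable_const
      exact (Continuous.measurable (by continuity))
    exact (Real.measurable_log.comp hbase).max measurable_const
  have hf_int : IntervalIntegrable (fun φ : ℝ =>
      logPlus ‖1 + c / ((r:ℂ) * Complex.exp (φ * Complex.I) - d)‖) volume 0 (2*π) := by
    apply hg_int.mono_fun' hf_meas.aestronglyMeasurable
    have hres := hae.filter_mono (ae_mono (Measure.restrict_le_self (s := Set.uIoc 0 (2*π))))
    filter_upwards [hres] with φ hφ
    rw [Real.norm_eq_abs, abs_of_nonneg (logPlus_nonneg _)]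
    exact hφ
  have step1 : (∫ φ in (0:ℝ)..(2*π),
        logPlus ‖1 + c / ((r:ℂ) * Complex.exp (φ * Complex.I) - d)‖)
      ≤ ∫ φ in (0:ℝ)..(2*π), C * S (φ - θ) :=
    intervalIntegral.integral_mono_ae (by positivity) hf_int hg_int hae
  have hper : Function.Periodic S (2*π) := Real.sin_periodic.comp fun y : ℝ => |y| ^ (-δ)
  have step2 : (∫ φ in (0:ℝ)..(2*π), C * S (φ - θ)) = C * ∫ u in (0:ℝ)..(2*π), S u := by
    have h := hper.intervalIntegral_add_eq (-θ) 0
    rw [intervalIntegral.integral_const_mul, intervalIntegral.integral_comp_sub_right S θ,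
      show (0:ℝ) - θ = -θ by ring, show 2*π - θ = -θ + 2*π by ring, h, zero_add]
  have step3 : C * (∫ u in (0:ℝ)..(2*π), S u) ≤ C * (4*π/(1-δ)) :=
    mul_le_mul_of_nonneg_left hJ2 hC
  have hfin : (1/(2*π)) * (C * (4*π/(1-δ))) ≤ 2*π*‖c‖^δ/(δ*(1-δ)*r^δ) := by
    rw [hCdef, Real.rpow_neg hr.le]
    have hQ : (0:ℝ) < r ^ δ := Real.rpow_pos_of_pos hr δ
    have e1 : (1/(2*π)) * ((‖c‖^δ/δ * (r^δ)⁻¹) * (4*π/(1-δ)))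
        = 2*‖c‖^δ/(δ*(1-δ)*r^δ) := by
      field_simp
      ring
    rw [e1]
    apply (div_le_div_iff_of_pos_right (by positivity)).mpr
    nlinarith [Real.pi_gt_three, Real.rpow_nonneg (norm_nonneg c) δ]
  calc (1 / (2 * π)) *
        ∫ φ in (0:ℝ)..(2 * π),
          logPlus ‖1 + c / ((r : ℂ) * Complex.exp (φ * Complex.I) - d)‖
      ≤ (1/(2*π)) * (C * (4*π/(1-δ))) := by
        apply mul_le_mul_of_nonneg_left _ (by positivity)
        exact (step1.trans_eq step2).trans step3
    _ ≤ 2 * π * ‖c‖ ^ δ / (δ * (1 - δ) * r ^ δ) := hfin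
end

section
/- Let T: [r₀, ∞) → [e, ∞) be a nondecreasing continuous function and let ε̃ > 0. Define the exceptional set E := { r ≥ r₀ : T(r + r/(log T(r))^{1+ε̃}) > 2 T(r) }. Then E has finite logarithmic measure, i.e., ∫_E dr/r < ∞. -/
open MeasureTheory

theorem stmt_13 (r₀ ε : ℝ) (hr₀ : 1 ≤ r₀) (hε : 0 < ε) (T : ℝ → ℝ)
    (hmono : MonotoneOn T (Set.Ici r₀)) (hcont : ContinuousOn T (Set.Ici r₀))
    (hT : ∀ r, r₀ ≤ r → Real.exp 1 ≤ T r) :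
    ∫⁻ r in {r : ℝ | r₀ ≤ r ∧
        2 * T r < T (r + r / Real.log (T r) ^ (1 + ε))},
      ENNReal.ofReal (1 / r) < ⊤ := by
  set c := Real.log 2 with hc
  have hcpos : 0 < c := Real.log_pos one_lt_two
  have hclt1 : c < 1 := by
    have := Real.log_two_lt_d9
    rw [hc]; linarith
  set E : Set ℝ := {r : ℝ | r₀ ≤ r ∧
      2 * T r < T (r + r / Real.log (T r) ^ (1 + ε))} with hEdef
  set En : ℕ → Set ℝ := fun n => {r | r ∈ E ∧ 1 + n * c ≤ Real.log (T r) ∧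
      Real.log (T r) < 1 + (n + 1) * c} with hEndef
  set cn : ℕ → ℝ := fun n => 1 / (1 + n * c) ^ (1 + ε) with hcndef
  have hbase : ∀ n : ℕ, (0:ℝ) < 1 + n * c := by
    intro n
    have : (0:ℝ) ≤ n * c := mul_nonneg (Nat.cast_nonneg n) hcpos.le
    linarith
  have hcnpos : ∀ n, 0 < cn n := by
    intro n
    exact div_pos one_pos (Real.rpow_pos_of_pos (hbase n) _)
  -- key claim
  have key : ∀ n : ℕ, ∀ r ∈ En n, ∀ r' ∈ En n, r' < r * (1 + cn n) := by
    intro n r hr r' hr'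
    obtain ⟨⟨hrr₀, hrE⟩, hLlo, hLhi⟩ := hr
    obtain ⟨⟨hr'r₀, hr'E⟩, hLlo', hLhi'⟩ := hr'
    by_contra hcon
    push_neg at hcon
    set L := Real.log (T r) with hL
    have hL1 : (1:ℝ) ≤ L := le_trans (by nlinarith [hbase n]) hLlo
    have hLpos : (0:ℝ) < L := by linarith
    have hrpos : (0:ℝ) < r := by linarith
    have hpow : (1 + n * c) ^ (1 + ε) ≤ L ^ (1 + ε) :=
      Real.rpow_le_rpow (hbase n).le hLlo (by linarith)
    have hcnle : 1 / L ^ (1 + ε) ≤ cn n :=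
      one_div_le_one_div_of_le (Real.rpow_pos_of_pos (hbase n) _) hpow
    have hdiv : r / L ^ (1 + ε) ≤ r * cn n := by
      rw [div_eq_mul_one_div]
      exact mul_le_mul_of_nonneg_left hcnle hrpos.le
    have hle : r + r / L ^ (1 + ε) ≤ r' := by nlinarith
    have hs : r₀ ≤ r + r / L ^ (1 + ε) := by
      have : 0 ≤ r / L ^ (1 + ε) :=
        div_nonneg hrpos.le (Real.rpow_pos_of_pos hLpos _).le
      linarith
    have hmono' : T (r + r / L ^ (1 + ε)) ≤ T r' := hmono (Set.mem_Ici.mpr hs) (Set.mem_Ici.mpr hr'r₀) hle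
    have hTrpos : 0 < T r := lt_of_lt_of_le (Real.exp_pos 1) (hT r hrr₀)
    have h2 : 2 * T r < T r' := lt_of_lt_of_le hrE hmono'
    have hlog : Real.log (2 * T r) < Real.log (T r') :=
      Real.log_lt_log (by positivity) h2
    rw [Real.log_mul two_ne_zero (ne_of_gt hTrpos)] at hlog
    rw [← hc, ← hL] at hlog
    linarith
  -- bound on each piece
  have bound : ∀ n : ℕ, ∫⁻ r in En n, ENNReal.ofReal (1 / r) ≤ ENNReal.ofReal (cn n) := by
    intro n
    rcases Set.eq_empty_or_nonempty (En n) with h | h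
    · rw [h, Measure.restrict_empty, lintegral_zero_measure]
      exact zero_le
    · set a := sInf (En n) with ha
      have hbdd : BddBelow (En n) := ⟨r₀, fun x hx => hx.1.1⟩
      have ha1 : r₀ ≤ a := le_csInf h (fun x hx => hx.1.1)
      have hapos : (0:ℝ) < a := by linarith
      have hsub : En n ⊆ Set.Icc a (a * (1 + cn n)) := by
        intro r' hr'
        refine ⟨csInf_le hbdd hr', ?_⟩
        by_contra hcon
        push_neg at hcon
        have h1cn : (0:ℝ) < 1 + cn n := by have := hcnpos n; linarith
        have : a < r' / (1 + cn n) := (lt_div_iff₀ h1cn).mpr (by linarith)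
        obtain ⟨r, hrmem, hrlt⟩ := exists_lt_of_csInf_lt h this
        have h2 : r * (1 + cn n) < r' := (lt_div_iff₀ h1cn).mp hrlt
        have h3 := key n r hrmem r' hr'
        linarith
      calc ∫⁻ r in En n, ENNReal.ofReal (1 / r)
          ≤ ∫⁻ r in Set.Icc a (a * (1 + cn n)), ENNReal.ofReal (1 / r) :=
            lintegral_mono_set hsub
        _ ≤ ∫⁻ _ in Set.Icc a (a * (1 + cn n)), ENNReal.ofReal (1 / a) := by
            refine setLIntegral_mono measurable_const (fun r hr => ?_)
            exact ENNReal.ofReal_le_ofReal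
              (one_div_le_one_div_of_le hapos hr.1)
        _ = ENNReal.ofReal (1 / a) * volume (Set.Icc a (a * (1 + cn n))) :=
            setLIntegral_const _ _
        _ = ENNReal.ofReal (cn n) := by
            rw [Real.volume_Icc, ← ENNReal.ofReal_mul (by positivity)]
            congr 1
            field_simp
            ring
  -- covering
  have hEsub : E ⊆ ⋃ n, En n := by
    intro r hr
    have hTe := hT r hr.1
    have hTrpos : 0 < T r := lt_of_lt_of_le (Real.exp_pos 1) hTe
    have hL1 : 1 ≤ Real.log (T r) := by
      have := Real.log_le_log (Real.exp_pos 1) hTe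
      rwa [Real.log_exp] at this
    set L := Real.log (T r) with hL
    set n := ⌊(L - 1) / c⌋₊ with hn
    refine Set.mem_iUnion.mpr ⟨n, hr, ?_, ?_⟩
    · have h1 : (n:ℝ) ≤ (L - 1) / c :=
        Nat.floor_le (div_nonneg (by linarith) hcpos.le)
      have h2 : (n:ℝ) * c ≤ L - 1 := (le_div_iff₀ hcpos).mp h1
      linarith
    · have h1 : (L - 1) / c < n + 1 := Nat.lt_floor_add_one _
      have h2 : L - 1 < ((n:ℝ) + 1) * c := (div_lt_iff₀ hcpos).mp h1
      push_cast
      linarith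
  -- summability
  have hsum : Summable cn := by
    have h1 : Summable (fun n : ℕ => ((n:ℝ) + 1) ^ (-(1 + ε))) := by
      have h0 : Summable (fun n : ℕ => (n:ℝ) ^ (-(1 + ε))) :=
        Real.summable_nat_rpow.mpr (by linarith)
      have := (summable_nat_add_iff 1).mpr h0
      simpa using this
    have h2 : Summable (fun n : ℕ => c ^ (-(1 + ε)) * ((n:ℝ) + 1) ^ (-(1 + ε))) :=
      h1.mul_left _
    refine Summable.of_nonneg_of_le (fun n => (hcnpos n).le) (fun n => ?_) h2
    have hnn : (0:ℝ) < (n:ℝ) + 1 := by positivity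
    have hb : c * ((n:ℝ) + 1) ≤ 1 + n * c := by nlinarith [Nat.cast_nonneg (α := ℝ) n]
    have hbpos : (0:ℝ) < c * ((n:ℝ) + 1) := by positivity
    have hpow : (c * ((n:ℝ) + 1)) ^ (1 + ε) ≤ (1 + n * c) ^ (1 + ε) :=
      Real.rpow_le_rpow hbpos.le hb (by linarith)
    have : cn n ≤ 1 / (c * ((n:ℝ) + 1)) ^ (1 + ε) :=
      one_div_le_one_div_of_le (Real.rpow_pos_of_pos hbpos _) hpow
    calc cn n ≤ 1 / (c * ((n:ℝ) + 1)) ^ (1 + ε) := this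
      _ = c ^ (-(1 + ε)) * ((n:ℝ) + 1) ^ (-(1 + ε)) := by
          rw [Real.mul_rpow hcpos.le hnn.le, Real.rpow_neg hcpos.le,
            Real.rpow_neg hnn.le]
          field_simp
  calc ∫⁻ r in E, ENNReal.ofReal (1 / r)
      ≤ ∫⁻ r in ⋃ n, En n, ENNReal.ofReal (1 / r) := lintegral_mono_set hEsub
    _ ≤ ∑' n, ∫⁻ r in En n, ENNReal.ofReal (1 / r) := lintegral_iUnion_le _ _
    _ ≤ ∑' n, ENNReal.ofReal (cn n) := ENNReal.tsum_le_tsum bound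
    _ = ENNReal.ofReal (∑' n, cn n) :=
        (ENNReal.ofReal_tsum_of_nonneg (fun n => (hcnpos n).le) hsum).symm
    _ < ⊤ := ENNReal.ofReal_lt_top
end
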